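/- Let f = u + iv : ℂ → ℂ (with u, v real-valued) be differentiable in the real sense at a point z, and let μ ∈ ℂ with |μ| < 1. Then the Beltrami equation ∂̄f(z) = μ ∂f(z) holds if and only if A_μ ∇u(z) = −Q ∇v(z), where Q = [[0, −1], [1, 0]] and ∇u, ∇v denote the gradients of u and v at z. -/

import Mathlib

/-- The Wirtinger derivative `∂̄f(z) = (1/2)(∂f/∂x + i ∂f/∂y)` of a map `f : ℂ → ℂ`
viewed as real-differentiable at `z`. -/
noncomputable def wirtingerBar (f : ℂ → ℂ) (z : ℂ) : ℂ :=
  (1 / 2) * (fderiv ℝ f z 1 + Complex.I * fderiv ℝ f z Complex.I)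

/-- The Wirtinger derivative `∂f(z) = (1/2)(∂f/∂x − i ∂f/∂y)`. -/
noncomputable def wirtinger (f : ℂ → ℂ) (z : ℂ) : ℂ :=
  (1 / 2) * (fderiv ℝ f z 1 - Complex.I * fderiv ℝ f z Complex.I)

open Matrix

/-- Let `f = u + iv : ℂ → ℂ` be real-differentiable at `z` and `|μ| < 1`.
Then the Beltrami equation `∂̄f(z) = μ ∂f(z)` holds iff `A_μ ∇u(z) = −Q ∇v(z)`. -/
theorem beltrami_iff_elliptic (f : ℂ → ℂ) (z : ℂ) (hf : DifferentiableAt ℝ f z)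
    (μ : ℂ) (hμ : ‖μ‖ < 1)
    (u v : ℂ → ℝ) (hu : u = fun w => (f w).re) (hv : v = fun w => (f w).im)
    (Q Aμ : Matrix (Fin 2) (Fin 2) ℝ)
    (hQ : Q = !![0, -1; 1, 0])
    (hA : Aμ = !![(1 - 2 * μ.re + ‖μ‖ ^ 2) / (1 - ‖μ‖ ^ 2),
                  -2 * μ.im / (1 - ‖μ‖ ^ 2);
                  -2 * μ.im / (1 - ‖μ‖ ^ 2),
                  (1 + 2 * μ.re + ‖μ‖ ^ 2) / (1 - ‖μ‖ ^ 2)])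
    (gradu gradv : Fin 2 → ℝ)
    (hgu : gradu = ![fderiv ℝ u z 1, fderiv ℝ u z Complex.I])
    (hgv : gradv = ![fderiv ℝ v z 1, fderiv ℝ v z Complex.I]) :
    wirtingerBar f z = μ * wirtinger f z ↔ Aμ.mulVec gradu = -(Q.mulVec gradv) := by
  have hu' : fderiv ℝ u z = Complex.reCLM.comp (fderiv ℝ f z) := by
    subst hu
    exact (Complex.reCLM.hasFDerivAt.comp z hf.hasFDerivAt).fderiv
  have hv' : fderiv ℝ v z = Complex.imCLM.comp (fderiv ℝ f z) := by
    subst hv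
    exact (Complex.imCLM.hasFDerivAt.comp z hf.hasFDerivAt).fderiv
  set a := fderiv ℝ f z 1 with ha
  set b := fderiv ℝ f z Complex.I with hb
  have hD : 1 - ‖μ‖ ^ 2 ≠ 0 := by
    have : ‖μ‖ ^ 2 < 1 := by nlinarith [norm_nonneg μ]
    linarith
  have hs : ‖μ‖ ^ 2 = μ.re ^ 2 + μ.im ^ 2 := by
    rw [Complex.sq_norm, Complex.normSq_apply]; ring
  subst hA hQ hgu hgv
  have hL : (wirtingerBar f z = μ * wirtinger f z) ↔
      (a + Complex.I * b = μ * (a - Complex.I * b)) := by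
    rw [wirtingerBar, wirtinger, ← ha, ← hb,
      show μ * ((1/2 : ℂ) * (a - Complex.I * b)) = (1/2 : ℂ) * (μ * (a - Complex.I * b)) by ring]
    exact mul_right_inj' (by norm_num)
  rw [hL, Complex.ext_iff]
  simp only [hu', hv', ContinuousLinearMap.comp_apply, Complex.reCLM_apply,
    Complex.imCLM_apply, ← ha, ← hb, Matrix.mulVec, dotProduct,
    Fin.sum_univ_two, funext_iff, Fin.forall_fin_two, Matrix.cons_val_zero,
    Matrix.cons_val_one, Matrix.head_cons, Pi.neg_apply, Matrix.cons_val',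
    Matrix.head_fin_const, Matrix.empty_val', Matrix.cons_val_fin_one,
    Matrix.of_apply, Complex.mul_re, Complex.mul_im, Complex.add_re, Complex.add_im,
    Complex.sub_re, Complex.sub_im, Complex.I_re, Complex.I_im]
  rw [hs] at hD ⊢
  have hD' := sub_ne_zero.mp hD
  constructor
  · rintro ⟨h1, h2⟩
    constructor
    · rw [div_mul_eq_mul_div, div_mul_eq_mul_div, ← add_div, div_eq_iff hD]
      ring_nf
      ring_nf at h1 h2
      linear_combination (1 - μ.re) * h1 - μ.im * h2
    · rw [div_mul_eq_mul_div, div_mul_eq_mul_div, ← add_div, div_eq_iff hD]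
      ring_nf
      ring_nf at h1 h2
      linear_combination (-μ.im) * h1 + (1 + μ.re) * h2
  · rintro ⟨h1, h2⟩
    rw [div_mul_eq_mul_div, div_mul_eq_mul_div, ← add_div, div_eq_iff hD] at h1 h2
    have key1 : (1 - (μ.re^2 + μ.im^2)) * (a.re - b.im) =
        (1 - (μ.re^2 + μ.im^2)) * (μ.re * (a.re + b.im) - μ.im * (a.im - b.re)) := by
      linear_combination (1 + μ.re) * h1 + μ.im * h2
    have key2 : (1 - (μ.re^2 + μ.im^2)) * (a.im + b.re) =
        (1 - (μ.re^2 + μ.im^2)) * (μ.re * (a.im - b.re) + μ.im * (a.re + b.im)) := by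
      linear_combination μ.im * h1 + (1 - μ.re) * h2
    have k1 := mul_left_cancel₀ hD key1
    have k2 := mul_left_cancel₀ hD key2
    constructor
    · linear_combination k1
    · linear_combination k2
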